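/- (Gradient variance formula.) Let H, V, ρ be Hermitian complex d×d matrices with V² = 𝟙. Then the variance of the cost gradient over θ uniformly distributed on [0, 2π] equals (1/2π) ∫₀^{2π} [d/dθ Tr(H · e^{−iθV} ρ e^{iθV})]² dθ = (1/2)·[ (Tr(ρ(H − VHV)))² − (Tr(ρ[V, H]))² ], where [A, B] = AB − BA. (Since the mean gradient is zero, this integral is the gradient variance.) -/

import Mathlib

open Matrix

noncomputable section

attribute [local instance] Matrix.linftyOpNormedAddCommGroup Matrix.linftyOpNormedRing
  Matrix.linftyOpNormedAlgebra

lemma exp_smul_involution {d : ℕ} {V : Matrix (Fin d) (Fin d) ℂ} (hV2 : V * V = 1) (z : ℂ) :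
    NormedSpace.exp (z • V) =
      Complex.cosh z • (1 : Matrix (Fin d) (Fin d) ℂ) + Complex.sinh z • V := by
  rw [NormedSpace.exp_eq_tsum (𝕂 := ℂ)]
  refine HasSum.tsum_eq ?_
  have hVeven : ∀ n : ℕ, V ^ (2 * n) = 1 := fun n => by
    rw [pow_mul, sq, hV2, one_pow]
  have hVodd : ∀ n : ℕ, V ^ (2 * n + 1) = V := fun n => by
    rw [pow_succ, hVeven, one_mul]
  refine HasSum.even_add_odd ?_ ?_
  · have h := (Complex.hasSum_cosh z).smul_const (1 : Matrix (Fin d) (Fin d) ℂ)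
    convert h using 2 with n
    case e'_3 => rfl
    rw [smul_pow, hVeven, smul_smul, div_eq_inv_mul]
  · have h := (Complex.hasSum_sinh z).smul_const V
    convert h using 2 with n
    case e'_3 => rfl
    rw [smul_pow, hVodd, smul_smul, div_eq_inv_mul]

/-- The cost landscape `θ ↦ Tr(H · e^{−iθV} ρ e^{iθV})` of a parameterized quantum circuit. -/
def costFn (d : ℕ) (H V ρ : Matrix (Fin d) (Fin d) ℂ) (θ : ℝ) : ℂ :=
  (H * NormedSpace.exp ((-(θ : ℂ) * Complex.I) • V) * ρ *
    NormedSpace.exp (((θ : ℂ) * Complex.I) • V)).trace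

lemma costFn_eq {d : ℕ} {H V ρ : Matrix (Fin d) (Fin d) ℂ} (hV2 : V * V = 1) (θ : ℝ) :
    costFn d H V ρ θ =
      (H * ρ).trace * Complex.cos θ ^ 2 + (H * V * ρ * V).trace * Complex.sin θ ^ 2 +
        (Complex.I * ((H * ρ * V).trace - (H * V * ρ).trace)) *
          (Complex.sin θ * Complex.cos θ) := by
  unfold costFn
  rw [exp_smul_involution hV2, exp_smul_involution hV2, Complex.cosh_mul_I,
    Complex.sinh_mul_I, Complex.cosh_mul_I, Complex.sinh_mul_I, Complex.cos_neg,
    Complex.sin_neg]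
  simp only [mul_add, add_mul, Matrix.mul_smul, Matrix.smul_mul, mul_one, Matrix.mul_one,
    trace_add, trace_smul, smul_smul, smul_eq_mul, neg_mul, neg_smul, trace_neg, mul_neg,
    Matrix.mul_assoc]
  ring_nf
  rw [Complex.I_sq]
  ring

lemma aux_hasDerivAt (a b K : ℂ) (θ : ℝ) :
    HasDerivAt (fun θ : ℝ => a * Complex.cos θ ^ 2 + b * Complex.sin θ ^ 2 +
        K * (Complex.sin θ * Complex.cos θ))
      ((b - a) * (2 * Complex.sin θ * Complex.cos θ) +
        K * (Complex.cos θ ^ 2 - Complex.sin θ ^ 2)) θ := by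
  have hc : HasDerivAt (fun θ : ℝ => Complex.cos θ) (-Complex.sin θ) θ :=
    (Complex.hasDerivAt_cos (θ : ℂ)).comp_ofReal
  have hs : HasDerivAt (fun θ : ℝ => Complex.sin θ) (Complex.cos θ) θ :=
    (Complex.hasDerivAt_sin (θ : ℂ)).comp_ofReal
  simp only [pow_two]
  have h1 := (hc.mul hc).const_mul a
  have h2 := (hs.mul hs).const_mul b
  have h3 := (hs.mul hc).const_mul K
  have h := (h1.add h2).add h3
  refine h.congr_deriv ?_
  ring

lemma Isinsq : ∫ θ in (0:ℝ)..(2*Real.pi), Real.sin (2*θ)^2 = Real.pi := by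
  have h4 : Real.sin (2*(2*Real.pi)) = 0 := by
    have := Real.sin_nat_mul_pi 4; push_cast at this; rw [show 2*(2*Real.pi) = 4*Real.pi by ring]
    exact this
  rw [intervalIntegral.integral_comp_mul_left (fun x => Real.sin x ^ 2)
    (by norm_num : (2:ℝ) ≠ 0), integral_sin_sq]
  rw [mul_zero, h4]
  simp

lemma Icossq : ∫ θ in (0:ℝ)..(2*Real.pi), Real.cos (2*θ)^2 = Real.pi := by
  have h4 : Real.sin (2*(2*Real.pi)) = 0 := by
    have := Real.sin_nat_mul_pi 4; push_cast at this; rw [show 2*(2*Real.pi) = 4*Real.pi by ring]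
    exact this
  rw [intervalIntegral.integral_comp_mul_left (fun x => Real.cos x ^ 2)
    (by norm_num : (2:ℝ) ≠ 0), integral_cos_sq]
  rw [mul_zero, h4]
  simp

lemma Isincos : ∫ θ in (0:ℝ)..(2*Real.pi), Real.sin (2*θ) * Real.cos (2*θ) = 0 := by
  have key : ∀ θ : ℝ, Real.sin (2*θ) * Real.cos (2*θ) = Real.sin (4*θ) / 2 := by
    intro θ
    rw [show (4:ℝ)*θ = 2*(2*θ) by ring, Real.sin_two_mul (2*θ)]; ring
  simp only [key]
  rw [intervalIntegral.integral_div,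
    intervalIntegral.integral_comp_mul_left (fun x => Real.sin x) (by norm_num : (4:ℝ) ≠ 0),
    integral_sin]
  have h8 : Real.cos (4*(2*Real.pi)) = 1 := by
    have := Real.cos_nat_mul_two_pi 4; push_cast at this; exact this
  rw [mul_zero, h8]
  simp

/-- **Gradient variance formula.** For Hermitian `H, V, ρ` with `V² = 𝟙`, the
variance of the cost gradient over `θ` uniformly distributed on `[0, 2π]` equals
`(1/2)·[(Tr(ρ(H − VHV)))² − (Tr(ρ[V,H]))²]`. -/
theorem gradient_variance (d : ℕ) (H V ρ : Matrix (Fin d) (Fin d) ℂ)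
    (hH : H.IsHermitian) (hV : V.IsHermitian) (hρ : ρ.IsHermitian) (hV2 : V * V = 1) :
    (1 / (2 * Real.pi) : ℂ) *
        ∫ θ in (0 : ℝ)..(2 * Real.pi), (deriv (costFn d H V ρ) θ) ^ 2 =
      (1 / 2 : ℂ) *
        (((ρ * (H - V * H * V)).trace) ^ 2 - ((ρ * (V * H - H * V)).trace) ^ 2) := by
  set a := (H * ρ).trace with ha
  set b := (H * V * ρ * V).trace with hb
  set c := (H * ρ * V).trace with hc
  set e := (H * V * ρ).trace with he
  set K : ℂ := Complex.I * (c - e) with hK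
  -- derivative of the cost function
  have hfun : costFn d H V ρ = fun θ : ℝ =>
      a * Complex.cos θ ^ 2 + b * Complex.sin θ ^ 2 + K * (Complex.sin θ * Complex.cos θ) :=
    funext (costFn_eq hV2)
  have hD : ∀ θ : ℝ, deriv (costFn d H V ρ) θ =
      (b - a) * (2 * Complex.sin θ * Complex.cos θ) +
        K * (Complex.cos θ ^ 2 - Complex.sin θ ^ 2) := by
    intro θ
    rw [hfun]
    exact (aux_hasDerivAt a b K θ).deriv
  -- the squared derivative in terms of real trigonometric functions
  have key : ∀ θ : ℝ, (deriv (costFn d H V ρ) θ) ^ 2 =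
      ((Real.sin (2*θ) ^ 2 : ℝ) : ℂ) * ((b - a) ^ 2) +
        (((Real.sin (2*θ) * Real.cos (2*θ) : ℝ)) : ℂ) * (2 * K * (b - a)) +
        ((Real.cos (2*θ) ^ 2 : ℝ) : ℂ) * (K ^ 2) := by
    intro θ
    rw [hD θ, Real.sin_two_mul, Real.cos_two_mul']
    push_cast
    ring
  simp only [key]
  -- integrate term by term
  have i1 : IntervalIntegrable (fun θ : ℝ => ((Real.sin (2*θ) ^ 2 : ℝ) : ℂ) * ((b - a) ^ 2))
      MeasureTheory.volume 0 (2 * Real.pi) := (Continuous.intervalIntegrable (by fun_prop) _ _)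
  have i2 : IntervalIntegrable
      (fun θ : ℝ => (((Real.sin (2*θ) * Real.cos (2*θ) : ℝ)) : ℂ) * (2 * K * (b - a)))
      MeasureTheory.volume 0 (2 * Real.pi) := (Continuous.intervalIntegrable (by fun_prop) _ _)
  have i3 : IntervalIntegrable (fun θ : ℝ => ((Real.cos (2*θ) ^ 2 : ℝ) : ℂ) * (K ^ 2))
      MeasureTheory.volume 0 (2 * Real.pi) := (Continuous.intervalIntegrable (by fun_prop) _ _)
  rw [intervalIntegral.integral_add (i1.add i2) i3, intervalIntegral.integral_add i1 i2,
    intervalIntegral.integral_mul_const, intervalIntegral.integral_mul_const,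
    intervalIntegral.integral_mul_const, intervalIntegral.integral_ofReal,
    intervalIntegral.integral_ofReal, intervalIntegral.integral_ofReal,
    Isinsq, Icossq, Isincos]
  -- trace identities
  have hb' : b = (ρ * (V * H * V)).trace := by
    rw [hb, trace_mul_comm (H * V * ρ) V, trace_mul_comm ρ (V * H * V)]
    simp [Matrix.mul_assoc]
  have ha' : a = (ρ * H).trace := by rw [ha, trace_mul_comm]
  have hc' : c = (ρ * (V * H)).trace := by
    rw [hc, trace_mul_comm (H * ρ) V, trace_mul_comm ρ (V * H)]
    simp [Matrix.mul_assoc]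
  have he' : e = (ρ * (H * V)).trace := by rw [he, trace_mul_comm]
  have hP : (ρ * (H - V * H * V)).trace = a - b := by
    rw [Matrix.mul_sub, trace_sub, ← ha', ← hb']
  have hQ : (ρ * (V * H - H * V)).trace = c - e := by
    rw [Matrix.mul_sub, trace_sub, ← hc', ← he']
  rw [hP, hQ, hK]
  have hπ : (Real.pi : ℂ) ≠ 0 := Complex.ofReal_ne_zero.mpr Real.pi_ne_zero
  simp only [Complex.ofReal_zero]
  field_simp
  ring_nf
  rw [Complex.I_sq]
  ring
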